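/- Let d ≥ 2 be a natural number and 1 < α < 2 a real number. For every p ∈ (1, ∞), one has κ_{(d−α)/p} ≤ κ_{(d−α)/2}; that is, κ_{(d−α)/2} = max over p ∈ (1,∞) of κ_{(d−α)/p}. -/

import Mathlib

open MeasureTheory Set

noncomputable def Brl (s v : ℝ) : ℝ := ∫ x in (0:ℝ)..1, x ^ (s - 1) * (1 - x) ^ (v - 1)

lemma brl_gamma {s v : ℝ} (hs : 0 < s) (hv : 0 < v) :
    Real.Gamma s * Real.Gamma v = Real.Gamma (s + v) * Brl s v := by
  have h := Complex.Gamma_mul_Gamma_eq_betaIntegral (s := (s : ℂ)) (t := (v : ℂ))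
    (by simpa using hs) (by simpa using hv)
  have hbeta : Complex.betaIntegral (s : ℂ) (v : ℂ) = ((Brl s v : ℝ) : ℂ) := by
    rw [Complex.betaIntegral, Brl, ← intervalIntegral.integral_ofReal]
    refine intervalIntegral.integral_congr fun x hx => ?_
    rw [Set.uIcc_of_le zero_le_one] at hx
    rw [Complex.ofReal_mul, Complex.ofReal_cpow hx.1, Complex.ofReal_cpow (by linarith [hx.2])]
    push_cast
    ring
  rw [hbeta, ← Complex.ofReal_add, Complex.Gamma_ofReal, Complex.Gamma_ofReal,
    Complex.Gamma_ofReal] at h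
  exact_mod_cast h

lemma brl_integrableOn {s v : ℝ} (hs : 0 < s) (hv : 0 < v) :
    IntegrableOn (fun x : ℝ => x ^ (s - 1) * (1 - x) ^ (v - 1)) (Ioo 0 1) := by
  have hc : IntervalIntegrable (fun x : ℝ => (x : ℂ) ^ ((s : ℂ) - 1) * (1 - x) ^ ((v : ℂ) - 1))
      volume 0 1 := Complex.betaIntegral_convergent (by simpa using hs) (by simpa using hv)
  have h1 : IntegrableOn (fun x : ℝ => (x : ℂ) ^ ((s : ℂ) - 1) * (1 - x) ^ ((v : ℂ) - 1))
      (Ioo 0 1) := (hc.1).mono_set Ioo_subset_Ioc_self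
  have h2 := h1.re
  refine MeasureTheory.IntegrableOn.congr_fun h2 (fun x hx => ?_) measurableSet_Ioo
  have hx0 : (0:ℝ) ≤ x := hx.1.le
  have hx1 : (0:ℝ) ≤ 1 - x := by linarith [hx.2]
  rw [show ((s:ℂ) - 1) = ((s - 1 : ℝ) : ℂ) by push_cast; ring,
      show ((v:ℂ) - 1) = ((v - 1 : ℝ) : ℂ) by push_cast; ring,
      ← Complex.ofReal_cpow hx0, show ((1:ℂ) - (x:ℂ)) = ((1 - x : ℝ) : ℂ) by push_cast; ring,
      ← Complex.ofReal_cpow hx1, ← Complex.ofReal_mul]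
  simp

lemma brl_eq_setIntegral {s v : ℝ} :
    Brl s v = ∫ x in Ioo (0:ℝ) 1, x ^ (s - 1) * (1 - x) ^ (v - 1) := by
  rw [Brl, intervalIntegral.integral_of_le zero_le_one, integral_Ioc_eq_integral_Ioo]

lemma brl_nonneg (s v : ℝ) : 0 ≤ Brl s v := by
  rw [brl_eq_setIntegral]
  refine setIntegral_nonneg measurableSet_Ioo fun x hx => ?_
  exact mul_nonneg (Real.rpow_nonneg hx.1.le _) (Real.rpow_nonneg (by linarith [hx.2]) _)

lemma brl_sq_le {s t v : ℝ} (hs : 0 < s) (ht : 0 < t) (hv : 0 < v) :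
    Brl ((s + t) / 2) v ^ 2 ≤ Brl s v * Brl t v := by
  set μ := volume.restrict (Ioo (0:ℝ) 1) with hμ
  set f : ℝ → ℝ := fun x => x ^ ((s - 1) / 2) * (1 - x) ^ ((v - 1) / 2) with hf
  set g : ℝ → ℝ := fun x => x ^ ((t - 1) / 2) * (1 - x) ^ ((v - 1) / 2) with hg
  have cont : ∀ a b : ℝ, ContinuousOn (fun x : ℝ => x ^ a * (1 - x) ^ b) (Ioo (0:ℝ) 1) := by
    intro a b
    refine ContinuousOn.mul (continuousOn_id.rpow_const fun x hx => Or.inl (ne_of_gt hx.1)) ?_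
    exact (continuousOn_const.sub continuousOn_id).rpow_const
      fun x hx => Or.inl (sub_pos.2 hx.2).ne'
  have hfm : AEStronglyMeasurable f μ := (cont _ _).aestronglyMeasurable measurableSet_Ioo
  have hgm : AEStronglyMeasurable g μ := (cont _ _).aestronglyMeasurable measurableSet_Ioo
  have sqeq : ∀ (a : ℝ), ∀ x ∈ Ioo (0:ℝ) 1,
      (x ^ ((a - 1) / 2) * (1 - x) ^ ((v - 1) / 2)) ^ 2 = x ^ (a - 1) * (1 - x) ^ (v - 1) := by
    intro a x hx
    have hx1 : (0:ℝ) < 1 - x := by linarith [hx.2]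
    rw [pow_two, mul_mul_mul_comm, ← Real.rpow_add hx.1, ← Real.rpow_add hx1]
    norm_num
  have hmem : ∀ a : ℝ, 0 < a → MemLp (fun x => x ^ ((a - 1) / 2) * (1 - x) ^ ((v - 1) / 2))
      (ENNReal.ofReal 2) μ := by
    intro a ha
    rw [show ENNReal.ofReal 2 = 2 by norm_num]
    refine (memLp_two_iff_integrable_sq
      ((cont _ _).aestronglyMeasurable measurableSet_Ioo)).2 ?_
    refine (brl_integrableOn ha hv).congr_fun (fun x hx => (sqeq a x hx).symm) measurableSet_Ioo
  have hconj : Real.HolderConjugate 2 2 := Real.HolderConjugate.two_two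
  have hfnn : 0 ≤ᵐ[μ] f := by
    filter_upwards [ae_restrict_mem measurableSet_Ioo] with x hx
    exact mul_nonneg (Real.rpow_nonneg hx.1.le _) (Real.rpow_nonneg (by linarith [hx.2]) _)
  have hgnn : 0 ≤ᵐ[μ] g := by
    filter_upwards [ae_restrict_mem measurableSet_Ioo] with x hx
    exact mul_nonneg (Real.rpow_nonneg hx.1.le _) (Real.rpow_nonneg (by linarith [hx.2]) _)
  have key := integral_mul_le_Lp_mul_Lq_of_nonneg hconj hfnn hgnn (hmem s hs) (hmem t ht)
  have hL : ∫ x, f x * g x ∂μ = Brl ((s + t) / 2) v := by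
    rw [brl_eq_setIntegral]
    refine setIntegral_congr_fun measurableSet_Ioo fun x hx => ?_
    have hx1 : (0:ℝ) < 1 - x := by linarith [hx.2]
    simp only [hf, hg]
    rw [mul_mul_mul_comm, ← Real.rpow_add hx.1, ← Real.rpow_add hx1,
      show (s-1)/2+(t-1)/2 = (s+t)/2 - 1 by ring, show (v-1)/2+(v-1)/2 = v-1 by ring]
  have hR : ∀ a : ℝ, (∫ x, (x ^ ((a - 1) / 2) * (1 - x) ^ ((v - 1) / 2)) ^ (2:ℝ) ∂μ) = Brl a v := by
    intro a
    rw [brl_eq_setIntegral]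
    refine setIntegral_congr_fun measurableSet_Ioo fun x hx => ?_
    rw [Real.rpow_two]
    exact sqeq a x hx
  rw [hL, hR s, hR t] at key
  have h2 : ∀ a : ℝ, 0 ≤ a → (a ^ ((1:ℝ)/2)) ^ 2 = a := by
    intro a ha
    rw [← Real.rpow_natCast (a ^ ((1:ℝ)/2)) 2, ← Real.rpow_mul ha]
    norm_num
  calc Brl ((s + t) / 2) v ^ 2
      ≤ (Brl s v ^ ((1:ℝ)/2) * Brl t v ^ ((1:ℝ)/2)) ^ 2 := by
        refine pow_le_pow_left₀ (brl_nonneg _ _) key 2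
    _ = Brl s v * Brl t v := by
        rw [mul_pow, h2 _ (brl_nonneg s v), h2 _ (brl_nonneg t v)]

lemma brl_pos {s v : ℝ} (hs : 0 < s) (hv : 0 < v) : 0 < Brl s v := by
  have h := brl_gamma hs hv
  have h1 := Real.Gamma_pos_of_pos hs
  have h2 := Real.Gamma_pos_of_pos hv
  have h3 := Real.Gamma_pos_of_pos (add_pos hs hv)
  nlinarith [brl_nonneg s v]


/-- `κ_β := 2^α Γ((β+α)/2) Γ((d−β)/2) / (Γ(β/2) Γ((d−β−α)/2))`. -/
noncomputable def kappa (d : ℕ) (α β : ℝ) : ℝ :=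
  2 ^ α * Real.Gamma ((β + α) / 2) * Real.Gamma (((d : ℝ) - β) / 2) /
    (Real.Gamma (β / 2) * Real.Gamma (((d : ℝ) - β - α) / 2))

/-- For every `p ∈ (1, ∞)`, `κ_{(d−α)/p} ≤ κ_{(d−α)/2}`:
`κ_{(d−α)/2}` is the maximum of `κ_{(d−α)/p}` over `p ∈ (1,∞)`. -/
theorem stmt_6 (d : ℕ) (hd : 2 ≤ d) (α : ℝ) (hα1 : 1 < α) (hα2 : α < 2)
    (p : ℝ) (hp : 1 < p) :
    kappa d α (((d : ℝ) - α) / p) ≤ kappa d α (((d : ℝ) - α) / 2) := by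
  have hd2 : (2:ℝ) ≤ (d:ℝ) := by exact_mod_cast hd
  have hdα : 0 < (d:ℝ) - α := by linarith
  set β : ℝ := ((d : ℝ) - α) / p with hβdef
  set c : ℝ := ((d : ℝ) - α) / 2 with hcdef
  have hβpos : 0 < β := div_pos hdα (by linarith)
  have hβlt : β < (d:ℝ) - α := by
    rw [hβdef, div_lt_iff₀ (by linarith)]
    nlinarith
  set γ : ℝ := (d:ℝ) - α - β with hγdef
  have hγpos : 0 < γ := by rw [hγdef]; linarith
  set v : ℝ := α / 2 with hvdef
  have hv : 0 < v := by rw [hvdef]; linarith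
  have hΓv : 0 < Real.Gamma v := Real.Gamma_pos_of_pos hv
  have hβ2 : 0 < β / 2 := by linarith
  have hγ2 : 0 < γ / 2 := by linarith
  have hc2 : 0 < c / 2 := by rw [hcdef]; linarith
  -- expressions for kappa
  have q : ∀ x : ℝ, 0 < x →
      Real.Gamma (x + v) = Real.Gamma x * Real.Gamma v / Brl x v := by
    intro x hx
    have g := brl_gamma hx hv
    have hB := (brl_pos hx hv).ne'
    field_simp
    linarith [g]
  have hκβ : kappa d α β = 2 ^ α * Real.Gamma v ^ 2 / (Brl (β/2) v * Brl (γ/2) v) := by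
    unfold kappa
    rw [show (β + α)/2 = β/2 + v by rw [hvdef]; ring,
        show ((d:ℝ) - β)/2 = γ/2 + v by rw [hγdef, hvdef]; ring,
        show ((d:ℝ) - β - α)/2 = γ/2 by rw [hγdef]; ring,
        q _ hβ2, q _ hγ2]
    have h1 := (Real.Gamma_pos_of_pos hβ2).ne'
    have h2 := (Real.Gamma_pos_of_pos hγ2).ne'
    have h3 := (brl_pos hβ2 hv).ne'
    have h4 := (brl_pos hγ2 hv).ne'
    field_simp
  have hκc : kappa d α c = 2 ^ α * Real.Gamma v ^ 2 / (Brl (c/2) v ^ 2) := by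
    unfold kappa
    rw [show (c + α)/2 = c/2 + v by rw [hcdef, hvdef]; ring,
        show ((d:ℝ) - c)/2 = c/2 + v by rw [hcdef, hvdef]; ring,
        show ((d:ℝ) - c - α)/2 = c/2 by rw [hcdef]; ring,
        q _ hc2]
    have h1 := (Real.Gamma_pos_of_pos hc2).ne'
    have h3 := (brl_pos hc2 hv).ne'
    field_simp
  have key : Brl (c/2) v ^ 2 ≤ Brl (β/2) v * Brl (γ/2) v := by
    have := brl_sq_le hβ2 hγ2 hv
    rwa [show (β/2 + γ/2)/2 = c/2 by rw [hγdef, hcdef]; ring] at this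
  rw [hκβ, hκc]
  have hA : 0 ≤ 2 ^ α * Real.Gamma v ^ 2 := by positivity
  rw [div_le_div_iff₀ (mul_pos (brl_pos hβ2 hv) (brl_pos hγ2 hv)) (pow_pos (brl_pos hc2 hv) 2)]
  exact mul_le_mul_of_nonneg_left key hA
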